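/- Any matrix B in Z^(2r×2r) with minimal polynomial p(X) = X² - X + 1 over Q is conjugate in GL(2r, Z) to the block-diagonal matrix diag(A, ..., A) with r blocks, where A = [[0, -1], [1, 1]]. -/

import Mathlib

open Polynomial

noncomputable section
namespace EisAux

abbrev q : ℤ[X] := X ^ 2 - X + 1

lemma hq : (q).Monic := by
  unfold q
  monicity!

lemma hqdeg : (q).natDegree = 2 := by
  unfold q
  compute_degree!

abbrev E := AdjoinRoot q

abbrev θ : E := AdjoinRoot.root q

lemma hθ : θ ^ 2 = θ - 1 := by
  have := AdjoinRoot.isRoot_root q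
  simp [IsRoot, q] at this
  linear_combination this

def pb : PowerBasis ℤ E := AdjoinRoot.powerBasis' hq

def bE : Module.Basis (Fin 2) ℤ E := pb.basis.reindex (finCongr (by simp [pb, hqdeg]))

lemma bE_apply (i : Fin 2) : bE i = θ ^ (i : ℕ) := by
  simp only [bE, Module.Basis.reindex_apply, pb.basis_eq_pow]
  simp [pb]
  rfl


def c1 (x : E) : ℤ := bE.repr x 0
def c2 (x : E) : ℤ := bE.repr x 1

lemma comb_eq (a b : ℤ) : (a : E) + (b : E) * θ = a • bE 0 + b • bE 1 := by
  simp only [bE_apply, Fin.val_zero, Fin.val_one, pow_zero, pow_one, zsmul_eq_mul]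
  push_cast
  ring

lemma repr_comb (a b : ℤ) : bE.repr ((a : E) + (b : E) * θ) =
    Finsupp.single 0 a + Finsupp.single 1 b := by
  rw [comb_eq, map_add, map_zsmul, map_zsmul, bE.repr_self, bE.repr_self]
  ext i
  simp

lemma c1_comb (a b : ℤ) : c1 ((a : E) + (b : E) * θ) = a := by
  simp [c1, repr_comb, Finsupp.single_apply]

lemma c2_comb (a b : ℤ) : c2 ((a : E) + (b : E) * θ) = b := by
  simp [c2, repr_comb, Finsupp.single_apply]

lemma x_eq (x : E) : x = (c1 x : E) + (c2 x : E) * θ := by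
  rw [comb_eq]
  have := bE.sum_repr x
  rw [Fin.sum_univ_two] at this
  exact this.symm

lemma mul_comb (a b c d : ℤ) : ((a : E) + (b : E) * θ) * ((c : E) + (d : E) * θ) =
    ((a * c - b * d : ℤ) : E) + ((a * d + b * c + b * d : ℤ) : E) * θ := by
  push_cast
  linear_combination ((b : E) * (d : E)) * hθ

def N (x : E) : ℤ := c1 x ^ 2 + c1 x * c2 x + c2 x ^ 2

lemma N_comb (a b : ℤ) : N ((a : E) + (b : E) * θ) = a ^ 2 + a * b + b ^ 2 := by
  simp [N, c1_comb, c2_comb]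

lemma N_mul (x y : E) : N (x * y) = N x * N y := by
  have h : x * y = ((c1 x * c1 y - c2 x * c2 y : ℤ) : E) +
      ((c1 x * c2 y + c2 x * c1 y + c2 x * c2 y : ℤ) : E) * θ := by
    conv_lhs => rw [x_eq x, x_eq y]
    exact mul_comb _ _ _ _
  rw [h, show N x * N y = _ from rfl]
  unfold N
  rw [c1_comb, c2_comb]
  ring

lemma N_nonneg (x : E) : 0 ≤ N x := by
  unfold N
  nlinarith [sq_nonneg (c1 x + c2 x), sq_nonneg (c1 x), sq_nonneg (c2 x)]

lemma N_zero : N 0 = 0 := by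
  have : (0 : E) = ((0 : ℤ) : E) + ((0 : ℤ) : E) * θ := by push_cast; ring
  rw [this, N_comb]
  norm_num

lemma N_one : N 1 = 1 := by
  have : (1 : E) = ((1 : ℤ) : E) + ((0 : ℤ) : E) * θ := by push_cast; ring
  rw [this, N_comb]
  norm_num

lemma eq_zero_of_N (x : E) (h : N x = 0) : x = 0 := by
  unfold N at h
  have ha : c1 x = 0 := by nlinarith [sq_nonneg (c1 x + c2 x), sq_nonneg (c1 x - c2 x)]
  have hb : c2 x = 0 := by nlinarith [sq_nonneg (c1 x + c2 x), sq_nonneg (c1 x - c2 x)]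
  rw [x_eq x, ha, hb]
  push_cast
  ring

lemma N_ne_zero (x : E) (h : x ≠ 0) : N x ≠ 0 := fun hN => h (eq_zero_of_N x hN)

def star' (x : E) : E := ((c1 x + c2 x : ℤ) : E) - (c2 x : E) * θ

lemma mul_star_comb (a b : ℤ) : ((a : E) + (b : E) * θ) * (((a + b : ℤ) : E) - (b : E) * θ) =
    ((a ^ 2 + a * b + b ^ 2 : ℤ) : E) := by
  push_cast
  linear_combination (-(b : E) ^ 2) * hθ

lemma mul_star' (x : E) : x * star' x = ((N x : ℤ) : E) := by
  have h : x * star' x = ((c1 x : E) + (c2 x : E) * θ) *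
      (((c1 x + c2 x : ℤ) : E) - ((c2 x : ℤ) : E) * θ) := by
    rw [← x_eq x]
    rfl
  rw [h, mul_star_comb]
  norm_num [N]

lemma N_star' (x : E) : N (star' x) = N x := by
  have h : star' x = ((c1 x + c2 x : ℤ) : E) + ((-(c2 x) : ℤ) : E) * θ := by
    unfold star'
    push_cast
    ring
  rw [h, N_comb]
  unfold N
  ring

instance : Nontrivial E := by
  refine ⟨0, 1, fun h => ?_⟩
  have := N_one
  rw [← h, N_zero] at this
  exact absurd this (by norm_num)

instance : NoZeroDivisors E := by
  refine ⟨fun {x y} hxy => ?_⟩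
  by_contra hc
  push_neg at hc
  have h1 : N x * N y = 0 := by rw [← N_mul, hxy, N_zero]
  rcases mul_eq_zero.mp h1 with h | h
  · exact N_ne_zero x hc.1 h
  · exact N_ne_zero y hc.2 h

instance : IsDomain E := NoZeroDivisors.to_isDomain E

/-- nearest-integer division helper -/
lemma round_bound (c n : ℤ) (hn : 0 < n) :
    ∃ q : ℤ, -n ≤ 2 * (c - q * n) ∧ 2 * (c - q * n) ≤ n := by
  refine ⟨(2 * c + n) / (2 * n), ?_⟩
  have h0 : (2 * n) ≠ 0 := by positivity
  have hmod : (2 * c + n) % (2 * n) = 2 * c + n - 2 * n * ((2 * c + n) / (2 * n)) := Int.emod_def _ _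
  have h1 : 0 ≤ (2 * c + n) % (2 * n) := Int.emod_nonneg _ h0
  have h2 : (2 * c + n) % (2 * n) < 2 * n := Int.emod_lt_of_pos _ (by positivity)
  have key : 2 * (c - (2 * c + n) / (2 * n) * n) = (2 * c + n) % (2 * n) - n := by
    rw [hmod]; ring
  omega

lemma div_rem (x y : E) (hy : y ≠ 0) :
    ∃ z : E, x - z * y = 0 ∨ (N (x - z * y)).natAbs < (N y).natAbs := by
  have hn : 0 < N y := lt_of_le_of_ne (N_nonneg y) (Ne.symm (N_ne_zero y hy))
  set n := N y with hndef
  set w := x * star' y with hw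
  obtain ⟨q1, hq1⟩ := round_bound (c1 w) n hn
  obtain ⟨q2, hq2⟩ := round_bound (c2 w) n hn
  set z : E := (q1 : E) + (q2 : E) * θ with hz
  refine ⟨z, ?_⟩
  by_cases hr : x - z * y = 0
  · exact Or.inl hr
  right
  set e1 : ℤ := c1 w - q1 * n with he1
  set e2 : ℤ := c2 w - q2 * n with he2
  have key : (x - z * y) * star' y = (e1 : E) + (e2 : E) * θ := by
    have : (x - z * y) * star' y = w - z * ((n : ℤ) : E) := by
      rw [hw, ← mul_star' y]; ring
    rw [this, hz, x_eq w, he1, he2]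
    push_cast
    ring
  have hNkey : N (x - z * y) * n = e1 ^ 2 + e1 * e2 + e2 ^ 2 := by
    have := N_mul (x - z * y) (star' y)
    rw [key, N_comb, N_star'] at this
    linarith [this]
  have hlt : N (x - z * y) < n := by
    have b1 : 4 * e1 ^ 2 ≤ n ^ 2 := by nlinarith [hq1.1, hq1.2]
    have b2 : 4 * e2 ^ 2 ≤ n ^ 2 := by nlinarith [hq2.1, hq2.2]
    nlinarith [sq_nonneg (e1 - e2), hn, hNkey, N_nonneg (x - z * y)]
  exact Int.natAbs_lt_natAbs_of_nonneg_of_lt (N_nonneg _) hlt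


instance : IsPrincipalIdealRing E := by
  refine ⟨fun I => ?_⟩
  by_cases hI : I = ⊥
  · rw [hI]; exact bot_isPrincipal
  · obtain ⟨x1, hx1I, hx1⟩ := Submodule.exists_mem_ne_zero_of_ne_bot hI
    set S : Set ℕ := {m : ℕ | ∃ x ∈ I, x ≠ 0 ∧ (N x).natAbs = m} with hS
    have hSne : S.Nonempty := ⟨(N x1).natAbs, x1, hx1I, hx1, rfl⟩
    obtain ⟨x₀, hx₀I, hx₀ne, hx₀N⟩ := Nat.sInf_mem hSne
    refine ⟨⟨x₀, ?_⟩⟩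
    apply le_antisymm
    · intro y hy
      obtain ⟨z, hz⟩ := div_rem y x₀ hx₀ne
      have hspan : y - z * x₀ = 0 → y ∈ Submodule.span E ({x₀} : Set E) := by
        intro h0
        rw [Submodule.mem_span_singleton]
        exact ⟨z, by rw [smul_eq_mul]; linear_combination -h0⟩
      by_cases h0 : y - z * x₀ = 0
      · exact hspan h0
      · rcases hz with hz | hz
        · exact hspan hz
        · exfalso
          have hmem : y - z * x₀ ∈ I := I.sub_mem hy (I.mul_mem_left z hx₀I)
          have hmemS : (N (y - z * x₀)).natAbs ∈ S := ⟨_, hmem, h0, rfl⟩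
          have := Nat.sInf_le hmemS
          omega
    · intro y hy
      rw [Submodule.mem_span_singleton] at hy
      obtain ⟨z, rfl⟩ := hy
      rw [smul_eq_mul]
      exact I.mul_mem_left z hx₀I

instance : Module.Free ℤ E := Module.Free.of_basis bE
instance : Module.Finite ℤ E := Module.Finite.of_basis bE

lemma finrank_E : Module.finrank ℤ E = 2 := by
  rw [Module.finrank_eq_card_basis bE, Fintype.card_fin]

section Action

variable {n : ℕ} (B : Matrix (Fin n) (Fin n) ℤ) (hB : B * B - B + 1 = 0)

/-- lift of the evaluation at `B` to `E`. -/
def ψ : E →+* Matrix (Fin n) (Fin n) ℤ :=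
  Ideal.Quotient.lift (Ideal.span {q}) (aeval B).toRingHom (by
    intro a ha
    rw [Ideal.mem_span_singleton] at ha
    obtain ⟨c, rfl⟩ := ha
    have hq0 : (aeval B) q = 0 := by
      simp only [q, map_add, map_sub, map_pow, aeval_X, map_one]
      rw [pow_two]
      exact hB
    simp [map_mul, hq0])

lemma ψ_θ : ψ B hB θ = B := by
  show ψ B hB (AdjoinRoot.mk q X) = B
  unfold ψ
  rw [AdjoinRoot.mk]
  erw [Ideal.Quotient.lift_mk]
  simp

def Φ : E →+* Module.End ℤ (Fin n → ℤ) :=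
  ((Matrix.toLinAlgEquiv' : Matrix (Fin n) (Fin n) ℤ ≃ₐ[ℤ] _).toRingEquiv.toRingHom).comp (ψ B hB)

end Action

end EisAux
end

open EisAux

/-- Any integer `2r × 2r` matrix with minimal polynomial `X² - X + 1` over `ℚ` is
conjugate in `GL(2r, ℤ)` to the block-diagonal matrix `diag(A, …, A)` with `r` blocks,
where `A = [[0,-1],[1,1]]`. -/
theorem stmt_0 (r : ℕ) (hr : 0 < r) (B : Matrix (Fin (2 * r)) (Fin (2 * r)) ℤ)
    (h : minpoly ℚ (B.map ((↑) : ℤ → ℚ)) = X ^ 2 - X + 1) :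
    ∃ P : Matrix (Fin (2 * r)) (Fin (2 * r)) ℤ, IsUnit P.det ∧
      P⁻¹ * B * P =
        (Matrix.reindex finProdFinEquiv finProdFinEquiv)
          (Matrix.blockDiagonal fun _ : Fin r => (!![0, -1; 1, 1] : Matrix (Fin 2) (Fin 2) ℤ)) := by
  classical
  -- the integral relation
  have hB : B * B - B + 1 = 0 := by
    have h0 : aeval (B.map ((↑) : ℤ → ℚ)) (minpoly ℚ (B.map ((↑) : ℤ → ℚ))) = 0 :=
      minpoly.aeval ℚ _
    rw [h] at h0
    simp only [map_add, map_sub, map_pow, aeval_X, map_one] at h0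
    have h1 : (B * B - B + 1).map ((↑) : ℤ → ℚ) = 0 := by
      have : (B * B - B + 1).map ((↑) : ℤ → ℚ) =
          (Int.castRingHom ℚ).mapMatrix (B * B - B + 1) := rfl
      rw [this, map_add, map_sub, map_mul, map_one]
      rw [pow_two] at h0
      exact h0
    ext i j
    have := congrFun (congrFun h1 i) j
    simp only [Matrix.map_apply, Matrix.add_apply, Matrix.sub_apply, Matrix.zero_apply] at this ⊢
    exact_mod_cast this
  set M := (Fin (2 * r) → ℤ) with hM
  letI : Module E M := Module.compHom M (Φ B hB)
  have smul_def : ∀ (x : E) (m : M), x • m = Φ B hB x m := fun _ _ => rfl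
  haveI : IsScalarTower ℤ E M := by
    constructor
    intro t x m
    rw [smul_def, smul_def, map_zsmul]
    rfl
  haveI : Module.Finite E M := Module.Finite.of_restrictScalars_finite ℤ E M
  have int_smul : ∀ (t : ℤ) (m : M), ((t : E)) • m = t • m := fun t m => by
    rw [show ((t : E)) = t • (1 : E) by simp, smul_assoc, one_smul]
  haveI : NoZeroSMulDivisors E M := by
    constructor
    intro x m hxm
    by_cases hx : x = 0
    · exact Or.inl hx
    · refine Or.inr ?_
      have hsx : star' x * x = ((N x : ℤ) : E) := by rw [mul_comm]; exact mul_star' x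
      have h2 : (star' x * x) • m = 0 := by
        rw [mul_smul, hxm, smul_zero]
      rw [hsx, int_smul] at h2
      exact (smul_eq_zero.mp h2).resolve_left (N_ne_zero x hx)
  haveI : Module.Free E M := Module.free_of_finite_type_torsion_free'
  -- basis over E of cardinality r
  set ι := Module.Free.ChooseBasisIndex E M with hι
  have b0 : Module.Basis ι E M := Module.Free.chooseBasis E M
  have hcard : Fintype.card ι = r := by
    have h1 : Module.finrank ℤ E * Module.finrank E M = Module.finrank ℤ M :=
      Module.finrank_mul_finrank ℤ E M
    have h2 : Module.finrank ℤ M = 2 * r := Module.finrank_fin_fun ℤ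
    rw [finrank_E, Module.finrank_eq_card_basis b0, h2] at h1
    omega
  have b : Module.Basis (Fin r) E M := b0.reindex (Fintype.equivFinOfCardEq hcard)
  set v : Module.Basis (Fin 2 × Fin r) ℤ M := bE.smulTower b with hv
  set v' : Module.Basis (Fin (2 * r)) ℤ M := v.reindex finProdFinEquiv with hv'
  set e : Module.Basis (Fin (2 * r)) ℤ M := Pi.basisFun ℤ (Fin (2 * r)) with he
  have hdet : IsUnit (e.toMatrix v').det :=
    Matrix.isUnit_det_of_right_inverse (e.toMatrix_mul_toMatrix_flip v')
  refine ⟨e.toMatrix v', hdet, ?_⟩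
  set f : M →ₗ[ℤ] M := Matrix.toLin' B with hf
  have hθ_smul : ∀ m : M, θ • m = f m := by
    intro m
    rw [smul_def]
    show (Matrix.toLinAlgEquiv' (ψ B hB θ)) m = _
    rw [ψ_θ]
    rfl
  set C : Matrix (Fin (2 * r)) (Fin (2 * r)) ℤ :=
    (Matrix.reindex finProdFinEquiv finProdFinEquiv)
      (Matrix.blockDiagonal fun _ : Fin r => (!![0, -1; 1, 1] : Matrix (Fin 2) (Fin 2) ℤ))
    with hC
  have hv1 : ∀ l, f (v (0, l)) = v (1, l) := by
    intro l
    rw [← hθ_smul, hv, Module.Basis.smulTower_apply, Module.Basis.smulTower_apply, smul_smul, bE_apply, bE_apply]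
    norm_num
  have hv2 : ∀ l, f (v (1, l)) = v (1, l) - v (0, l) := by
    intro l
    rw [← hθ_smul, hv]
    simp only [Module.Basis.smulTower_apply, bE_apply, smul_smul, Fin.val_zero, Fin.val_one, pow_zero,
      pow_one]
    rw [← pow_two, hθ, sub_smul, one_smul]
  have htm : LinearMap.toMatrix v' v' f = C := by
    ext i j
    rw [LinearMap.toMatrix_apply, hC, Matrix.reindex_apply, Matrix.submatrix_apply, hv',
      Module.Basis.reindex_apply, Module.Basis.repr_reindex_apply]
    set pi := finProdFinEquiv.symm i with hpi
    set pj := finProdFinEquiv.symm j with hpj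
    clear_value pi pj
    obtain ⟨i1, k⟩ := pi
    obtain ⟨j1, l⟩ := pj
    fin_cases j1
    · rw [show ((⟨0, by norm_num⟩ : Fin 2), l) = ((0 : Fin 2), l) by rfl, hv1, v.repr_self]
      fin_cases i1 <;>
        simp [Finsupp.single_apply, Matrix.blockDiagonal_apply, Prod.ext_iff, eq_comm]
    · rw [show ((⟨1, by norm_num⟩ : Fin 2), l) = ((1 : Fin 2), l) by rfl, hv2, map_sub,
        v.repr_self, v.repr_self]
      fin_cases i1 <;>
        simp [Finsupp.single_apply, Matrix.blockDiagonal_apply, Prod.ext_iff, eq_comm] <;>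
        (try split_ifs <;> norm_num)
  have hB_eq : B = e.toMatrix v' * C * v'.toMatrix e := by
    rw [← htm, basis_toMatrix_mul_linearMap_toMatrix_mul_basis_toMatrix, he,
      LinearMap.toMatrix_eq_toMatrix', hf, LinearMap.toMatrix'_toLin']
  have hBP : B * e.toMatrix v' = e.toMatrix v' * C := by
    conv_lhs => rw [hB_eq]
    rw [Matrix.mul_assoc, Matrix.mul_assoc, Module.Basis.toMatrix_mul_toMatrix_flip, Matrix.mul_one]
  rw [Matrix.mul_assoc, hBP, ← Matrix.mul_assoc, Matrix.nonsing_inv_mul _ hdet, Matrix.one_mul]
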